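/- arXiv:1005.1035 — 2 statements merged into one kernel-verified Lean document; each statement's English description precedes it below -/
import Mathlib

section
/- Suppose (ξ_n) is a sequence of finite nonnegative Borel measures on ℝ₊, W ≥ 0, and x* ∈ (0,∞), such that for every ε ∈ (0, x*): ξ_n([0, x*−ε]) → 0, ∫_{(x*+ε,∞)} y dξ_n(y) → 0, and ∫_{(x*−ε, x*+ε]} y dξ_n(y) → W. Then ξ_n converges weakly to (W/x*)·δ_{x*}. -/
open MeasureTheory Set Filter

set_option maxHeartbeats 1000000 in
/-- If ξ_n are finite measures on ℝ₊ with finite first moments, W ≥ 0, x* ∈ (0,∞), and for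
every ε ∈ (0,x*): ξ_n([0,x*−ε]) → 0, ∫_{(x*+ε,∞)} y dξ_n → 0, and
∫_{(x*−ε,x*+ε]} y dξ_n → W, then ξ_n converges weakly to (W/x*)·δ_{x*}, i.e.
∫ g dξ_n → (W/x*)·g(x*) for every bounded continuous g. -/
theorem stmt_3 (ξ : ℕ → Measure ℝ) [∀ n, IsFiniteMeasure (ξ n)]
    (hneg : ∀ n, ξ n (Set.Iio 0) = 0) (hint : ∀ n, Integrable (fun y => y) (ξ n))
    (W : ℝ) (hW : 0 ≤ W) (xstar : ℝ) (hxstar : 0 < xstar)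
    (hbelow : ∀ ε : ℝ, 0 < ε → ε < xstar →
      Tendsto (fun n => (ξ n (Set.Icc 0 (xstar - ε))).toReal) atTop (nhds 0))
    (htail : ∀ ε : ℝ, 0 < ε → ε < xstar →
      Tendsto (fun n => ∫ y in Set.Ioi (xstar + ε), y ∂(ξ n)) atTop (nhds 0))
    (hmid : ∀ ε : ℝ, 0 < ε → ε < xstar →
      Tendsto (fun n => ∫ y in Set.Ioc (xstar - ε) (xstar + ε), y ∂(ξ n)) atTop (nhds W)) :
    ∀ g : ℝ → ℝ, Continuous g → (∃ C : ℝ, ∀ y : ℝ, |g y| ≤ C) →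
      Tendsto (fun n => ∫ y, g y ∂(ξ n)) atTop (nhds ((W / xstar) * g xstar)) := by
  rintro g hg ⟨C, hC⟩
  have hC0 : 0 ≤ C := le_trans (abs_nonneg _) (hC 0)
  have hgint : ∀ n, Integrable g (ξ n) := fun n =>
    Integrable.mono' (integrable_const C) hg.aestronglyMeasurable
      (Eventually.of_forall fun y => by simpa [Real.norm_eq_abs] using hC y)
  rw [Metric.tendsto_nhds]
  intro δ hδ
  set δ4 := δ / 4 with hδ4def
  have hδ4 : 0 < δ4 := by positivity
  set K := 2 * (W + 1) / xstar with hKdef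
  have hK0 : 0 < K := by positivity
  have hK1 : (0:ℝ) < K + 1 := by linarith
  clear_value K
  have hC1 : (0:ℝ) < C + 1 := by linarith
  obtain ⟨ε₁, hε₁, hosc⟩ :=
    Metric.continuousAt_iff.mp (hg.continuousAt (x := xstar)) (δ4 / (K + 1)) (by positivity)
  obtain ⟨θ, hθ, hθ1, hθle'⟩ :
      ∃ θ : ℝ, 0 < θ ∧ θ ≤ 1 ∧ θ * (8 * (C + 1)) ≤ δ4 * xstar := by
    refine ⟨min 1 (δ4 * xstar / (8 * (C + 1))), lt_min one_pos (by positivity),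
      min_le_left _ _, ?_⟩
    have h := min_le_right 1 (δ4 * xstar / (8 * (C + 1)))
    exact (le_div_iff₀ (by positivity)).mp h
  obtain ⟨ε, hε, hεε₁, hεx2, hεle'⟩ :
      ∃ ε : ℝ, 0 < ε ∧ ε < ε₁ ∧ ε ≤ xstar / 2 ∧
        ε * (8 * (C + 1) * (W + 1)) ≤ δ4 * xstar ^ 2 := by
    refine ⟨min (min (ε₁ / 2) (xstar / 2)) (δ4 * xstar ^ 2 / (8 * (C + 1) * (W + 1))),
      lt_min (lt_min (by positivity) (by positivity)) (by positivity),
      lt_of_le_of_lt ((min_le_left _ _).trans (min_le_left _ _)) (by linarith),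
      (min_le_left _ _).trans (min_le_right _ _), ?_⟩
    exact (le_div_iff₀ (by positivity)).mp (min_le_right _ _)
  have hεx : ε < xstar := lt_of_le_of_lt hεx2 (by linarith)
  clear_value δ4
  set a := xstar - ε with hadef
  set b := xstar + ε with hbdef
  have ha0 : 0 < a := by simp only [hadef]; linarith
  have ha2 : xstar / 2 ≤ a := by simp only [hadef]; linarith
  have hb0 : 0 < b := by simp only [hbdef]; linarith
  have hab : a ≤ b := by simp only [hadef, hbdef]; linarith
  have hxb : xstar ≤ b := by simp only [hbdef]; linarith
  have hxs2 : (0:ℝ) < xstar ^ 2 := by positivity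
  clear_value a b
  -- oscillation bound on Ioc a b
  have hoscB : ∀ y ∈ Ioc a b, |g y - g xstar| ≤ δ4 / (K + 1) := by
    intro y hy
    obtain ⟨hy1, hy2⟩ := hy
    have hd : dist y xstar < ε₁ := by
      rw [Real.dist_eq, abs_lt]
      constructor
      · simp only [hadef] at hy1; linarith
      · simp only [hbdef] at hy2; linarith
    have := hosc hd
    rw [Real.dist_eq] at this
    exact this.le
  -- helper
  have hCmul : ∀ t : ℝ, 0 ≤ t → t < δ4 / (C + 1) → C * t < δ4 := by
    intro t ht0 htlt
    have h := (lt_div_iff₀ hC1).mp htlt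
    linarith only [h, ht0]
  -- eventual facts
  have E1 : ∀ᶠ n in atTop, ((ξ n) (Icc 0 a)).toReal < δ4 / (C + 1) := by
    rw [hadef]
    exact (hbelow ε hε hεx).eventually (eventually_lt_nhds (div_pos hδ4 hC1))
  have E2 : ∀ᶠ n in atTop, (∫ y in Ioi b, y ∂(ξ n)) < b * (δ4 / (C + 1)) := by
    rw [hbdef]
    exact (htail ε hε hεx).eventually (eventually_lt_nhds (mul_pos (by linarith) (div_pos hδ4 hC1)))
  have E3 : ∀ᶠ n in atTop, |(∫ y in Ioc a b, y ∂(ξ n)) - W| < θ := by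
    rw [hadef, hbdef]
    have := Metric.tendsto_nhds.mp (hmid ε hε hεx) θ hθ
    simpa [Real.dist_eq] using this
  filter_upwards [E1, E2, E3] with n h1 h2 h3
  set m := ((ξ n) (Ioc a b)).toReal with hmdef
  set I := ∫ y in Ioc a b, y ∂(ξ n) with hIdef
  have hm0 : 0 ≤ m := ENNReal.toReal_nonneg
  obtain ⟨h3a, h3b⟩ := abs_lt.mp h3
  -- decomposition
  have hdec : ∫ y, g y ∂(ξ n)
      = (∫ y in Iic a, g y ∂(ξ n)) + (∫ y in Ioc a b, g y ∂(ξ n))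
        + ∫ y in Ioi b, g y ∂(ξ n) := by
    have hu1 : (∫ y in Iic b, g y ∂(ξ n)) + ∫ y in Ioi b, g y ∂(ξ n) = ∫ y, g y ∂(ξ n) := by
      rw [← setIntegral_union (Iic_disjoint_Ioi le_rfl) measurableSet_Ioi
        (hgint n).integrableOn (hgint n).integrableOn, Iic_union_Ioi, setIntegral_univ]
    have hu2 : (∫ y in Iic a, g y ∂(ξ n)) + ∫ y in Ioc a b, g y ∂(ξ n)
        = ∫ y in Iic b, g y ∂(ξ n) := by
      rw [← setIntegral_union (Iic_disjoint_Ioc le_rfl) measurableSet_Ioc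
        (hgint n).integrableOn (hgint n).integrableOn, Iic_union_Ioc_eq_Iic hab]
    linarith
  -- T1
  have hT1 : |∫ y in Iic a, g y ∂(ξ n)| < δ4 := by
    have hb1 : ‖∫ y in Iic a, g y ∂(ξ n)‖ ≤ C * ((ξ n) (Iic a)).toReal :=
      norm_setIntegral_le_of_norm_le_const (measure_lt_top _ _)
        (fun x _ => by simpa [Real.norm_eq_abs] using hC x)
    rw [Real.norm_eq_abs] at hb1
    have hmono : ((ξ n) (Iic a)).toReal ≤ ((ξ n) (Icc 0 a)).toReal := by
      have hmle : (ξ n) (Iic a) ≤ (ξ n) (Icc 0 a) := by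
        have hsub : Iic a ⊆ Iio 0 ∪ Icc 0 a := by
          intro x hx
          rcases lt_or_ge x 0 with h | h
          · exact Or.inl h
          · exact Or.inr ⟨h, hx⟩
        calc (ξ n) (Iic a) ≤ (ξ n) (Iio 0 ∪ Icc 0 a) := measure_mono hsub
          _ ≤ (ξ n) (Iio 0) + (ξ n) (Icc 0 a) := measure_union_le _ _
          _ = (ξ n) (Icc 0 a) := by rw [hneg n, zero_add]
      exact ENNReal.toReal_mono (measure_ne_top _ _) hmle
    have hlt : ((ξ n) (Iic a)).toReal < δ4 / (C + 1) := lt_of_le_of_lt hmono h1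
    calc |∫ y in Iic a, g y ∂(ξ n)| ≤ C * ((ξ n) (Iic a)).toReal := hb1
      _ < δ4 := hCmul _ ENNReal.toReal_nonneg hlt
  -- T3
  have htail_meas : b * ((ξ n) (Ioi b)).toReal ≤ ∫ y in Ioi b, y ∂(ξ n) := by
    have hmono : (∫ _ in Ioi b, b ∂(ξ n)) ≤ ∫ y in Ioi b, y ∂(ξ n) :=
      setIntegral_mono_on (integrableOn_const (measure_ne_top _ _))
        (hint n).integrableOn measurableSet_Ioi (fun x hx => le_of_lt hx)
    rwa [setIntegral_const, smul_eq_mul, mul_comm] at hmono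
  have hT3 : |∫ y in Ioi b, g y ∂(ξ n)| < δ4 := by
    have hb1 : ‖∫ y in Ioi b, g y ∂(ξ n)‖ ≤ C * ((ξ n) (Ioi b)).toReal :=
      norm_setIntegral_le_of_norm_le_const (measure_lt_top _ _)
        (fun x _ => by simpa [Real.norm_eq_abs] using hC x)
    rw [Real.norm_eq_abs] at hb1
    have hlt : ((ξ n) (Ioi b)).toReal < δ4 / (C + 1) := by
      have hbb : b * ((ξ n) (Ioi b)).toReal < b * (δ4 / (C + 1)) :=
        lt_of_le_of_lt htail_meas h2
      exact (mul_lt_mul_iff_right₀ hb0).mp hbb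
    calc |∫ y in Ioi b, g y ∂(ξ n)| ≤ C * ((ξ n) (Ioi b)).toReal := hb1
      _ < δ4 := hCmul _ ENNReal.toReal_nonneg hlt
  -- middle mass bounds
  have hIm1 : a * m ≤ I := by
    have hmono : (∫ _ in Ioc a b, a ∂(ξ n)) ≤ ∫ y in Ioc a b, y ∂(ξ n) :=
      setIntegral_mono_on (integrableOn_const (measure_ne_top _ _))
        (hint n).integrableOn measurableSet_Ioc (fun x hx => hx.1.le)
    rwa [setIntegral_const, smul_eq_mul, mul_comm] at hmono
  have hIm2 : I ≤ b * m := by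
    have hmono : (∫ y in Ioc a b, y ∂(ξ n)) ≤ ∫ _ in Ioc a b, b ∂(ξ n) :=
      setIntegral_mono_on (hint n).integrableOn
        (integrableOn_const (measure_ne_top _ _))
        measurableSet_Ioc (fun x hx => hx.2)
    rwa [setIntegral_const, smul_eq_mul, mul_comm] at hmono
  have hF : a * m ≤ W + θ := hIm1.trans (by linarith)
  have hF2 : W - θ ≤ b * m := le_trans (by linarith) hIm2
  have hmK : m ≤ K := by
    have hmx : m * xstar ≤ 2 * (W + 1) := by
      have h := mul_le_mul_of_nonneg_right ha2 hm0
      linarith only [h, hF, hθ1]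
    rw [hKdef, le_div_iff₀ hxstar]
    linarith only [hmx]
  -- T2
  have hT2eq : (∫ y in Ioc a b, (g y - g xstar) ∂(ξ n))
      = (∫ y in Ioc a b, g y ∂(ξ n)) - g xstar * m := by
    rw [integral_sub (hgint n).integrableOn
      (integrableOn_const (measure_ne_top _ _)), setIntegral_const,
      smul_eq_mul, mul_comm]
    rfl
  have hT2 : |∫ y in Ioc a b, (g y - g xstar) ∂(ξ n)| ≤ δ4 := by
    have hb1 : ‖∫ y in Ioc a b, (g y - g xstar) ∂(ξ n)‖ ≤ (δ4 / (K + 1)) * m :=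
      norm_setIntegral_le_of_norm_le_const (measure_lt_top _ _)
        (fun x hx => by simpa [Real.norm_eq_abs] using hoscB x hx)
    rw [Real.norm_eq_abs] at hb1
    refine hb1.trans ?_
    have h' : (δ4 / (K + 1)) * m ≤ (δ4 / (K + 1)) * (K + 1) :=
      mul_le_mul_of_nonneg_left (by linarith only [hmK]) (div_pos hδ4 hK1).le
    rwa [div_mul_cancel₀ _ (ne_of_gt hK1)] at h'
  clear_value m I
  -- T4 : |m - W/xstar| bound
  have hF' : (xstar - ε) * m ≤ W + θ := by rw [← hadef]; exact hF
  have hF2' : W - θ ≤ (xstar + ε) * m := by rw [← hbdef]; exact hF2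
  have hG1 : m * xstar ^ 2 ≤ W * xstar + 2 * θ * xstar + 2 * ε * W := by
    linarith only [mul_le_mul_of_nonneg_right hF' (by positivity : (0:ℝ) ≤ xstar + 2 * ε),
      mul_nonneg hm0 (mul_nonneg hε.le (show (0:ℝ) ≤ xstar - 2 * ε by linarith only [hεx2])),
      mul_nonneg hθ.le (show (0:ℝ) ≤ xstar - 2 * ε by linarith only [hεx2])]
  have hG2 : W * xstar - m * xstar ^ 2 ≤ 2 * θ * xstar + 2 * ε * W := by
    linarith only [mul_le_mul_of_nonneg_right hF2' hxstar.le,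
      mul_le_mul_of_nonneg_right hF' (by positivity : (0:ℝ) ≤ 2 * ε),
      mul_nonneg (mul_nonneg hε.le hm0) (show (0:ℝ) ≤ xstar - 2 * ε by linarith only [hεx2]),
      mul_nonneg hθ.le (show (0:ℝ) ≤ xstar - 2 * ε by linarith only [hεx2])]
  have habs4 : |m - W / xstar| ≤ (2 * θ * xstar + 2 * ε * W) / xstar ^ 2 := by
    rw [abs_le]
    constructor
    · have heq : W / xstar - m = (W * xstar - m * xstar ^ 2) / xstar ^ 2 := by
        field_simp
      have h' : W / xstar - m ≤ (2 * θ * xstar + 2 * ε * W) / xstar ^ 2 := by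
        rw [heq]; exact (div_le_div_iff_of_pos_right hxs2).mpr hG2
      linarith
    · have heq : m - W / xstar = (m * xstar ^ 2 - W * xstar) / xstar ^ 2 := by
        field_simp
      rw [heq]
      exact (div_le_div_iff_of_pos_right hxs2).mpr (by linarith)
  have hT4 : |g xstar * (m - W / xstar)| ≤ δ4 / 2 := by
    rw [abs_mul]
    have h1' : |g xstar| * |m - W / xstar| ≤ C * ((2 * θ * xstar + 2 * ε * W) / xstar ^ 2) :=
      mul_le_mul (hC xstar) habs4 (abs_nonneg _) hC0
    refine h1'.trans ?_
    rw [mul_div_assoc', div_le_iff₀ hxs2]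
    linarith only [mul_le_mul_of_nonneg_right hθle' hxstar.le, hεle',
      mul_nonneg hθ.le hxstar.le, mul_nonneg hε.le hC0, mul_nonneg hε.le hW, hε.le]
  -- conclusion
  rw [Real.dist_eq]
  have key : (∫ y, g y ∂(ξ n)) - W / xstar * g xstar
      = (∫ y in Iic a, g y ∂(ξ n)) + (∫ y in Ioc a b, (g y - g xstar) ∂(ξ n))
        + (∫ y in Ioi b, g y ∂(ξ n)) + g xstar * (m - W / xstar) := by
    rw [hdec, hT2eq]; ring
  rw [key]
  obtain ⟨e1a, e1b⟩ := abs_lt.mp hT1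
  obtain ⟨e2a, e2b⟩ := abs_le.mp hT2
  obtain ⟨e3a, e3b⟩ := abs_lt.mp hT3
  obtain ⟨e4a, e4b⟩ := abs_le.mp hT4
  rw [abs_lt]
  constructor <;> linarith only [e1a, e1b, e2a, e2b, e3a, e3b, e4a, e4b, hδ4def, hδ4]
end

section
/- Let (ξ_n) be finite nonnegative Borel measures on ℝ₊ with finite first moments and x* ∈ (0,∞). Suppose for every ν-continuity-type ε ∈ (0,x*): ξ_n([0, x*−ε]) → 0 and ∫_{(x*+ε,∞)} y dξ_n(y) → 0, and that the total first moments ∫ y dξ_n(y) → W for some W ≥ 0. Then the total masses converge: ξ_n(ℝ₊) → W/x*. -/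
open MeasureTheory Set Filter

/-- If for every ε ∈ (0,x*), ξ_n([0,x*−ε]) → 0 and ∫_{(x*+ε,∞)} y dξ_n → 0, and the
first moments ∫ y dξ_n → W, then the total masses ξ_n(ℝ₊) → W/x*. -/
theorem stmt_17 (ξ : ℕ → Measure ℝ) [∀ n, IsFiniteMeasure (ξ n)]
    (hsupp : ∀ n, ξ n (Set.Iic 0) = 0) (hint : ∀ n, Integrable (fun y => y) (ξ n))
    (xstar : ℝ) (hxstar : 0 < xstar) (W : ℝ) (hW : 0 ≤ W)
    (hbelow : ∀ ε : ℝ, 0 < ε → ε < xstar →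
      Tendsto (fun n => (ξ n (Set.Icc 0 (xstar - ε))).toReal) atTop (nhds 0))
    (htail : ∀ ε : ℝ, 0 < ε → ε < xstar →
      Tendsto (fun n => ∫ y in Set.Ioi (xstar + ε), y ∂(ξ n)) atTop (nhds 0))
    (hmom : Tendsto (fun n => ∫ y, y ∂(ξ n)) atTop (nhds W)) :
    Tendsto (fun n => (ξ n Set.univ).toReal) atTop (nhds (W / xstar)) := by
  rw [Metric.tendsto_atTop]
  intro δ hδ
  set ε : ℝ := min (xstar / 2) (δ * xstar ^ 2 / (4 * (W + 1))) with hε_def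
  have hε0 : 0 < ε := lt_min (by positivity) (by positivity)
  have hε1 : ε ≤ xstar / 2 := min_le_left _ _
  have hε2 : ε ≤ δ * xstar ^ 2 / (4 * (W + 1)) := min_le_right _ _
  have hεx : ε < xstar := lt_of_le_of_lt hε1 (by linarith)
  set b : ℝ := xstar - ε with hb_def
  set c : ℝ := xstar + ε with hc_def
  have hb0 : 0 < b := by simp only [hb_def]; linarith
  have hc0 : 0 < c := by simp only [hc_def]; linarith
  have hbc : b ≤ c := by simp only [hb_def, hc_def]; linarith
  have hbx : b ≤ xstar := by simp only [hb_def]; linarith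
  -- gap estimates
  have hε2' : ε * (4 * (W + 1)) ≤ δ * xstar ^ 2 := by
    rw [← le_div_iff₀ (by positivity)]; exact hε2
  have hgap1 : W / b < W / xstar + δ := by
    rw [div_lt_iff₀ hb0]
    have hxb : xstar / 2 ≤ b := by simp only [hb_def]; linarith
    have : (W / xstar + δ) * b = W + (δ * b - W * ε / xstar) := by
      field_simp; ring
    rw [this]
    have h1 : W * ε / xstar ≤ δ * xstar / 4 := by
      rw [div_le_iff₀ hxstar]
      nlinarith [hε0.le, hδ.le]
    nlinarith
  have hgap2 : W / xstar - δ < W / c := by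
    rw [sub_lt_iff_lt_add, div_lt_iff₀ hxstar]
    have : (W / c + δ) * xstar = W + (δ * xstar - W * ε / c) := by
      field_simp; ring
    rw [this]
    have h1 : 0 ≤ W * ε / c := by positivity
    have h2 : W * ε / c ≤ W * ε / xstar := by
      gcongr <;> first
        | positivity
        | (simp only [hc_def]; linarith)
    have h3 : W * ε / xstar ≤ δ * xstar / 4 := by
      rw [div_le_iff₀ hxstar]
      nlinarith [hε0.le, hδ.le]
    nlinarith
  -- sequences
  have ha := hbelow ε hε0 hεx
  have ht := htail ε hε0 hεx
  set a : ℕ → ℝ := fun n => ((ξ n) (Icc 0 b)).toReal with ha_def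
  set t : ℕ → ℝ := fun n => ∫ y in Ioi c, y ∂(ξ n) with ht_def
  set B : ℕ → ℝ := fun n => ∫ y in Iic b, y ∂(ξ n) with hB_def
  set M : ℕ → ℝ := fun n => ∫ y in Ioc b c, y ∂(ξ n) with hM_def
  -- a.e. positivity
  have hpos : ∀ n, ∀ᵐ y ∂(ξ n), 0 < y := by
    intro n
    rw [ae_iff]
    have : {y : ℝ | ¬ 0 < y} = Iic 0 := by ext y; simp
    rw [this]; exact hsupp n
  -- split of the integral
  have hsplit : ∀ n, ∫ y, y ∂(ξ n) = B n + M n + t n := by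
    intro n
    have h1 : ∫ y in Ioi b, y ∂(ξ n) = M n + t n := by
      rw [← setIntegral_union (Ioc_disjoint_Ioi le_rfl) measurableSet_Ioi
        ((hint n).integrableOn) ((hint n).integrableOn),
        Ioc_union_Ioi_eq_Ioi hbc]
    rw [← intervalIntegral.integral_Iic_add_Ioi ((hint n).integrableOn) ((hint n).integrableOn), h1]
    ring
  -- B bounds
  have hB0 : ∀ n, 0 ≤ B n := by
    intro n
    apply setIntegral_nonneg_ae measurableSet_Iic
    filter_upwards [hpos n] with y hy _ using hy.le
  have hξIic : ∀ n, (ξ n) (Iic b) ≤ (ξ n) (Icc 0 b) := by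
    intro n
    calc (ξ n) (Iic b) ≤ (ξ n) (Iic 0 ∪ Icc 0 b) := by
          apply measure_mono
          intro y hy
          rcases le_or_gt y 0 with h | h
          · exact Or.inl h
          · exact Or.inr ⟨h.le, hy⟩
      _ ≤ (ξ n) (Iic 0) + (ξ n) (Icc 0 b) := measure_union_le _ _
      _ = (ξ n) (Icc 0 b) := by rw [hsupp n, zero_add]
  have hBle : ∀ n, B n ≤ xstar * a n := by
    intro n
    calc B n ≤ ∫ _ in Iic b, xstar ∂(ξ n) := by
          apply setIntegral_mono_on ((hint n).integrableOn)
            (integrable_const _).integrableOn measurableSet_Iic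
          intro y hy
          exact le_trans hy hbx
      _ = ((ξ n) (Iic b)).toReal * xstar := by rw [setIntegral_const]; simp [smul_eq_mul, Measure.real]
      _ ≤ a n * xstar := by
          apply mul_le_mul_of_nonneg_right _ hxstar.le
          exact ENNReal.toReal_mono (measure_ne_top _ _) (hξIic n)
      _ = xstar * a n := mul_comm _ _
  have hB_tendsto : Tendsto B atTop (nhds 0) := by
    apply squeeze_zero hB0 hBle
    simpa using ha.const_mul xstar
  -- M tendsto W
  have hM_tendsto : Tendsto M atTop (nhds W) := by
    have : Tendsto (fun n => (∫ y, y ∂(ξ n)) - B n - t n) atTop (nhds (W - 0 - 0)) :=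
      (hmom.sub hB_tendsto).sub ht
    simp only [sub_zero] at this
    apply this.congr
    intro n
    rw [hsplit n]; ring
  -- pieces of the mass
  have hmass : ∀ n, ((ξ n) univ).toReal
      = ((ξ n) (Iic b)).toReal + ((ξ n) (Ioc b c)).toReal + ((ξ n) (Ioi c)).toReal := by
    intro n
    have h1 : (ξ n) (Ioi b) = (ξ n) (Ioc b c) + (ξ n) (Ioi c) := by
      rw [← measure_union (Ioc_disjoint_Ioi le_rfl) measurableSet_Ioi,
        Ioc_union_Ioi_eq_Ioi hbc]
    have h2 : (ξ n) univ = (ξ n) (Iic b) + ((ξ n) (Ioc b c) + (ξ n) (Ioi c)) := by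
      rw [← h1, ← measure_union (Iic_disjoint_Ioi le_rfl) measurableSet_Ioi, Iic_union_Ioi]
    rw [h2, ENNReal.toReal_add (measure_ne_top _ _) (by
      exact ENNReal.add_ne_top.mpr ⟨measure_ne_top _ _, measure_ne_top _ _⟩),
      ENNReal.toReal_add (measure_ne_top _ _) (measure_ne_top _ _)]
    ring
  -- bounds relating M, t and masses
  have hm_lb : ∀ n, b * ((ξ n) (Ioc b c)).toReal ≤ M n := by
    intro n
    calc b * ((ξ n) (Ioc b c)).toReal = ∫ _ in Ioc b c, b ∂(ξ n) := by
          rw [setIntegral_const]; simp [smul_eq_mul, mul_comm, Measure.real]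
      _ ≤ M n := by
          apply setIntegral_mono_on (integrable_const _).integrableOn
            ((hint n).integrableOn) measurableSet_Ioc
          intro y hy
          exact hy.1.le
  have hm_ub : ∀ n, M n ≤ c * ((ξ n) (Ioc b c)).toReal := by
    intro n
    calc M n ≤ ∫ _ in Ioc b c, c ∂(ξ n) := by
          apply setIntegral_mono_on ((hint n).integrableOn)
            (integrable_const _).integrableOn measurableSet_Ioc
          intro y hy
          exact hy.2
      _ = c * ((ξ n) (Ioc b c)).toReal := by rw [setIntegral_const]; simp [smul_eq_mul, mul_comm, Measure.real]
  have ht_lb : ∀ n, c * ((ξ n) (Ioi c)).toReal ≤ t n := by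
    intro n
    calc c * ((ξ n) (Ioi c)).toReal = ∫ _ in Ioi c, c ∂(ξ n) := by
          rw [setIntegral_const]; simp [smul_eq_mul, mul_comm, Measure.real]
      _ ≤ t n := by
          apply setIntegral_mono_on (integrable_const _).integrableOn
            ((hint n).integrableOn) measurableSet_Ioi
          intro y hy
          exact hy.le
  -- upper and lower bounds for the total mass
  have hf_ub : ∀ n, ((ξ n) univ).toReal ≤ a n + M n / b + t n / c := by
    intro n
    rw [hmass n]
    have h1 : ((ξ n) (Iic b)).toReal ≤ a n :=
      ENNReal.toReal_mono (measure_ne_top _ _) (hξIic n)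
    have h2 : ((ξ n) (Ioc b c)).toReal ≤ M n / b := by
      rw [le_div_iff₀ hb0, mul_comm]; exact hm_lb n
    have h3 : ((ξ n) (Ioi c)).toReal ≤ t n / c := by
      rw [le_div_iff₀ hc0, mul_comm]; exact ht_lb n
    linarith
  have hf_lb : ∀ n, M n / c ≤ ((ξ n) univ).toReal := by
    intro n
    rw [hmass n]
    have h2 : M n / c ≤ ((ξ n) (Ioc b c)).toReal := by
      rw [div_le_iff₀ hc0, mul_comm]; exact hm_ub n
    have h1 : 0 ≤ ((ξ n) (Iic b)).toReal := ENNReal.toReal_nonneg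
    have h3 : 0 ≤ ((ξ n) (Ioi c)).toReal := ENNReal.toReal_nonneg
    linarith
  -- limits of the bounds
  have hu : Tendsto (fun n => a n + M n / b + t n / c) atTop (nhds (W / b)) := by
    have := (ha.add (hM_tendsto.div_const b)).add (ht.div_const c)
    simpa using this
  have hl : Tendsto (fun n => M n / c) atTop (nhds (W / c)) :=
    hM_tendsto.div_const c
  have hev1 : ∀ᶠ n in atTop, a n + M n / b + t n / c < W / xstar + δ :=
    hu.eventually_lt_const hgap1
  have hev2 : ∀ᶠ n in atTop, W / xstar - δ < M n / c :=
    hl.eventually_const_lt hgap2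
  rcases (hev1.and hev2).exists_forall_of_atTop with ⟨N, hN⟩
  refine ⟨N, fun n hn => ?_⟩
  obtain ⟨h1, h2⟩ := hN n hn
  rw [Real.dist_eq, abs_lt]
  constructor
  · have := hf_lb n
    linarith
  · have := hf_ub n
    linarith
end
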